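/- Under the Markov ambiguity set with independent types, any favored-agent mechanism with favored agent i* ∈ argmax_i μ̲_i and threshold ν* ≥ max_i μ̲_i has worst-case expected payoff at least max_i μ̲_i and is therefore optimal: conditional on max_{i ≠ i*}(t̃_i − c_i) < ν*, independence gives E[t̃_{i*} | ·] = E[t̃_{i*}] ≥ μ̲_{i*}, and conditional on max_{i ≠ i*}(t̃_i − c_i) ≥ ν*, the payoff max_i(t̃_i − c_i) ≥ ν* ≥ max_i μ̲_i. -/

import Mathlib

open MeasureTheory

/-- The type space: every coordinate lies in `[tlo i, thi i]`. -/
def InT {ι : Type*} (tlo thi : ι → ℝ) (t : ι → ℝ) : Prop :=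
  ∀ i, t i ∈ Set.Icc (tlo i) (thi i)

/-- Membership in the Markov ambiguity set: a probability distribution supported on the
type space whose marginal means lie in `[mlo i, mhi i]`. -/
def InP {ι : Type*} [Fintype ι] (tlo thi mlo mhi : ι → ℝ) (P : Measure (ι → ℝ)) : Prop :=
  IsProbabilityMeasure P ∧ (∀ᵐ t ∂P, InT tlo thi t) ∧
    ∀ i, ∫ t, t i ∂P ∈ Set.Icc (mlo i) (mhi i)

/-- The principal's payoff in scenario `t`. -/
def Pay {ι : Type*} [Fintype ι] (c : ι → ℝ) (p q : (ι → ℝ) → ι → ℝ) (t : ι → ℝ) : ℝ :=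
  ∑ i, (p t i * t i - q t i * c i)

/-- Feasibility: values in `[0,1]`, `q ≤ p`, and total allocation at most one, on the type space. -/
def Feas {ι : Type*} [Fintype ι] (tlo thi : ι → ℝ) (p q : (ι → ℝ) → ι → ℝ) : Prop :=
  ∀ t, InT tlo thi t →
    (∀ i, 0 ≤ q t i ∧ q t i ≤ p t i ∧ p t i ≤ 1) ∧ ∑ i, p t i ≤ 1

/-- Incentive compatibility: no agent gains by misreporting his type. -/
def IC {ι : Type*} [DecidableEq ι] (tlo thi : ι → ℝ) (p q : (ι → ℝ) → ι → ℝ) : Prop :=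
  ∀ i, ∀ t, InT tlo thi t → ∀ s ∈ Set.Icc (tlo i) (thi i),
    p (Function.update t i s) i - q (Function.update t i s) i ≤ p t i

/-- The coordinates `t̃_1, …, t̃_I` are mutually independent under `P`. -/
def IndepCoords {ι : Type*} [Fintype ι] (P : MeasureTheory.Measure (ι → ℝ)) : Prop :=
  ProbabilityTheory.iIndepFun (fun i (t : ι → ℝ) => t i) P

/-- The quantity `max_{i ≠ i*} (t_i - c_i)`. -/
noncomputable def maxOther {ι : Type*} (c : ι → ℝ) (istar : ι) (t : ι → ℝ) : ℝ :=
  ⨆ j : {j : ι // j ≠ istar}, (t j.1 - c j.1)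

/-- Rule (i) of a favored-agent mechanism at scenario `t`: the favored agent `i*` receives
the good with probability one and nobody is inspected. -/
def RuleI {ι : Type*} (istar : ι) (p q : (ι → ℝ) → ι → ℝ) (t : ι → ℝ) : Prop :=
  p t istar = 1 ∧ q t istar = 0 ∧ ∀ i, i ≠ istar → p t i = 0 ∧ q t i = 0

/-- Rule (ii) of a favored-agent mechanism at scenario `t`: the lexicographically smallest
agent maximizing `t_i - c_i` receives the good and is inspected with probability one. -/
def RuleII {ι : Type*} [LinearOrder ι] (c : ι → ℝ) (p q : (ι → ℝ) → ι → ℝ)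
    (t : ι → ℝ) : Prop :=
  ∃ i', (∀ i, t i - c i ≤ t i' - c i') ∧ (∀ i, t i - c i = t i' - c i' → i' ≤ i) ∧
    p t i' = 1 ∧ q t i' = 1 ∧ ∀ i, i ≠ i' → p t i = 0 ∧ q t i = 0

/-- A favored-agent mechanism with favored agent `i*` and threshold `ν`: rule (i) applies
whenever `max_{i ≠ i*}(t_i - c_i) < ν`, rule (ii) applies whenever
`max_{i ≠ i*}(t_i - c_i) > ν`, and at ties one of the two rules is used throughout
(type (i) or type (ii) mechanisms). -/
def IsFA {ι : Type*} [Fintype ι] [LinearOrder ι] (tlo thi c : ι → ℝ) (istar : ι) (ν : ℝ)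
    (p q : (ι → ℝ) → ι → ℝ) : Prop :=
  (∀ t, InT tlo thi t → maxOther c istar t < ν → RuleI istar p q t) ∧
  (∀ t, InT tlo thi t → ν < maxOther c istar t → RuleII c p q t) ∧
  ((∀ t, InT tlo thi t → maxOther c istar t = ν → RuleI istar p q t) ∨
    (∀ t, InT tlo thi t → maxOther c istar t = ν → RuleII c p q t))

section core
variable {ι : Type*} [Fintype ι] [Nontrivial ι] [LinearOrder ι]
set_option linter.unusedSectionVars false

lemma payI {c : ι → ℝ} {p q : (ι → ℝ) → ι → ℝ} {istar : ι} {t : ι → ℝ}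
    (h : RuleI istar p q t) : Pay c p q t = t istar := by
  obtain ⟨h1, h2, h3⟩ := h
  rw [Pay, Finset.sum_eq_single istar]
  · rw [h1, h2]; ring
  · intro i _ hi; rw [(h3 i hi).1, (h3 i hi).2]; ring
  · simp

lemma payII {c : ι → ℝ} {p q : (ι → ℝ) → ι → ℝ} {t : ι → ℝ}
    (h : RuleII c p q t) :
    Pay c p q t = Finset.univ.sup' Finset.univ_nonempty (fun i => t i - c i) := by
  obtain ⟨i', hmax, -, h1, h2, h3⟩ := h
  rw [Pay, Finset.sum_eq_single i']
  · rw [h1, h2]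
    rw [one_mul, one_mul]
    refine le_antisymm (Finset.le_sup' (f := fun i => t i - c i) (Finset.mem_univ i')) ?_
    exact Finset.sup'_le _ _ fun i _ => hmax i
  · intro i _ hi; rw [(h3 i hi).1, (h3 i hi).2]; ring
  · simp

lemma maxOther_le_sup (c : ι → ℝ) (istar : ι) (t : ι → ℝ) :
    maxOther c istar t ≤ Finset.univ.sup' Finset.univ_nonempty (fun i => t i - c i) := by
  have : Nonempty {j : ι // j ≠ istar} := ⟨⟨(exists_ne istar).choose, (exists_ne istar).choose_spec⟩⟩
  rw [maxOther, ← Finset.sup'_univ_eq_ciSup]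
  exact Finset.sup'_le _ _ fun j _ => Finset.le_sup' (f := fun i => t i - c i) (Finset.mem_univ j.1)
end core

lemma indepCoords_dirac {ι : Type*} [Fintype ι] (a : ι → ℝ) :
    IndepCoords (Measure.dirac a) := by
  rw [IndepCoords, ProbabilityTheory.iIndepFun_iff_measure_inter_preimage_eq_mul]
  intro S sets hsets
  classical
  simp only [Measure.dirac_apply, Set.indicator_apply, Set.mem_preimage, Set.mem_iInter,
    Pi.one_apply]
  rw [Finset.prod_boole]
  simp

lemma core {ι : Type*} [Fintype ι] [Nontrivial ι] [LinearOrder ι]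
    (tlo thi mlo mhi c : ι → ℝ) (istar : ι) (ν M : ℝ)
    (hM : M ≤ mlo istar) (hMν : M ≤ ν) (hc : ∀ i, 0 < c i)
    (p q : (ι → ℝ) → ι → ℝ)
    (S' : Set ({j : ι // j ≠ istar} → ℝ)) (hS' : MeasurableSet S')
    (hI : ∀ t, InT tlo thi t → (fun j : {j : ι // j ≠ istar} => t j.1) ∈ S' → RuleI istar p q t)
    (hII : ∀ t, InT tlo thi t → (fun j : {j : ι // j ≠ istar} => t j.1) ∉ S' → RuleII c p q t)
    (hν' : ∀ t, InT tlo thi t → (fun j : {j : ι // j ≠ istar} => t j.1) ∉ S' →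
      ν ≤ maxOther c istar t)
    (P : Measure (ι → ℝ)) (hP : InP tlo thi mlo mhi P) (hind : IndepCoords P) :
    M ≤ ∫ t, Pay c p q t ∂P := by
  classical
  obtain ⟨hprob, hae, hmean⟩ := hP
  set proj : (ι → ℝ) → ({j : ι // j ≠ istar} → ℝ) := fun t j => t j.1 with hprojdef
  have hprojmeas : Measurable proj := measurable_pi_lambda _ fun j => measurable_pi_apply j.1
  set S : Set (ι → ℝ) := proj ⁻¹' S' with hSdef
  have hSmeas : MeasurableSet S := hprojmeas hS'
  set F : (ι → ℝ) → ℝ := fun t => Finset.univ.sup' Finset.univ_nonempty (fun i => t i - c i)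
    with hFdef
  have hFmeas : Measurable F := by
    have h := Finset.measurable_sup' (s := (Finset.univ : Finset ι)) Finset.univ_nonempty
      (f := fun i (t : ι → ℝ) => t i - c i)
      (fun i _ => (measurable_pi_apply i).sub measurable_const)
    have he : Finset.univ.sup' Finset.univ_nonempty (fun i (t : ι → ℝ) => t i - c i) = F :=
      funext fun t => Finset.sup'_apply _ _ t
    rwa [he] at h
  set X : (ι → ℝ) → ℝ := fun t => t istar with hXdef
  have hXmeas : Measurable X := measurable_pi_apply istar
  set Y : (ι → ℝ) → ℝ := fun t => S'.indicator 1 (proj t) with hYdef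
  have hYmeas : Measurable Y := (measurable_one.indicator hS').comp hprojmeas
  set f1 : (ι → ℝ) → ℝ := S.indicator X with hf1def
  set f2 : (ι → ℝ) → ℝ := Sᶜ.indicator F with hf2def
  -- bound
  set C : ℝ := Finset.univ.sup' Finset.univ_nonempty (fun i => |tlo i| + |thi i| + c i)
    with hCdef
  have hterm : ∀ i, 0 ≤ |tlo i| + |thi i| + c i := fun i => by
    have h1 := abs_nonneg (tlo i); have h2 := abs_nonneg (thi i); have h3 := (hc i).le; linarith
  have hC0 : (0:ℝ) ≤ C :=
    le_trans (hterm (Classical.arbitrary ι)) (Finset.le_sup' (f := fun i => |tlo i| + |thi i| + c i) (Finset.mem_univ _))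
  have habs : ∀ t, InT tlo thi t → ∀ i, |t i| ≤ C := by
    intro t ht i
    have h := ht i
    have : |t i| ≤ |tlo i| + |thi i| + c i := by
      rw [abs_le]
      constructor
      · have := neg_abs_le (tlo i); have := (hc i).le; have := abs_nonneg (thi i)
        have := h.1; linarith
      · have := le_abs_self (thi i); have := (hc i).le; have := abs_nonneg (tlo i)
        have := h.2; linarith
    exact this.trans (Finset.le_sup' (f := fun i => |tlo i| + |thi i| + c i) (Finset.mem_univ i))
  have hFb : ∀ t, InT tlo thi t → |F t| ≤ C := by
    intro t ht
    rw [abs_le]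
    constructor
    · have i0 := Classical.arbitrary ι
      have h1 : t i0 - c i0 ≤ F t := Finset.le_sup' (f := fun i => t i - c i) (Finset.mem_univ i0)
      have h5 : |tlo i0| + |thi i0| + c i0 ≤ C :=
        Finset.le_sup' (f := fun i => |tlo i| + |thi i| + c i) (Finset.mem_univ i0)
      have h6 := neg_abs_le (tlo i0)
      have h7 := (ht i0).1
      have h8 := abs_nonneg (thi i0)
      linarith
    · refine Finset.sup'_le _ _ fun i _ => ?_
      have := le_abs_self (t i); have := (hc i).le; have := habs t ht i; linarith
  -- a.e. equality of Pay with f1 + f2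
  have hpay : (fun t => Pay c p q t) =ᵐ[P] fun t => f1 t + f2 t := by
    filter_upwards [hae] with t ht
    by_cases hts : proj t ∈ S'
    · have hS'' : t ∈ S := hts
      rw [payI (hI t ht hts), hf1def, hf2def, Set.indicator_of_mem hS'',
        Set.indicator_of_notMem (by simpa using hS''), add_zero]
    · have hS'' : t ∉ S := hts
      rw [payII (hII t ht hts), hf1def, hf2def, Set.indicator_of_notMem hS'',
        Set.indicator_of_mem (by simpa using hS''), zero_add]
  -- integrability
  have hint1 : Integrable f1 P := by
    refine ⟨(hXmeas.indicator hSmeas).aestronglyMeasurable, ?_⟩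
    refine HasFiniteIntegral.of_bounded (C := C) ?_
    filter_upwards [hae] with t ht
    by_cases hts : t ∈ S
    · rw [hf1def, Set.indicator_of_mem hts]; exact habs t ht istar
    · rw [hf1def, Set.indicator_of_notMem hts]; simpa using hC0
  have hint2 : Integrable f2 P := by
    refine ⟨(hFmeas.indicator hSmeas.compl).aestronglyMeasurable, ?_⟩
    refine HasFiniteIntegral.of_bounded (C := C) ?_
    filter_upwards [hae] with t ht
    by_cases hts : t ∈ Sᶜ
    · rw [hf2def, Set.indicator_of_mem hts]; exact hFb t ht
    · rw [hf2def, Set.indicator_of_notMem hts]; simpa using hC0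
  -- independence of X and Y
  have hdisj : Disjoint ({istar} : Finset ι) ({istar}ᶜ : Finset ι) := disjoint_compl_right
  have hbig := hind.indepFun_finset {istar} {istar}ᶜ hdisj (fun i => measurable_pi_apply i)
  have hφ : Measurable (fun x : {y : ι // y ∈ ({istar} : Finset ι)} → ℝ =>
      x ⟨istar, Finset.mem_singleton_self istar⟩) := measurable_pi_apply _
  set res : ({y : ι // y ∈ (({istar} : Finset ι)ᶜ : Finset ι)} → ℝ) → ({j : ι // j ≠ istar} → ℝ) :=
    fun x j => x ⟨j.1, Finset.mem_compl.mpr (fun h => j.2 (Finset.mem_singleton.mp h))⟩ with hres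
  have hresmeas : Measurable res := measurable_pi_lambda _ fun j => measurable_pi_apply _
  have hind1 : Measurable (S'.indicator (1 : ({j : ι // j ≠ istar} → ℝ) → ℝ)) :=
    measurable_one.indicator hS'
  have hψ : Measurable (fun x => S'.indicator 1 (res x)) := hind1.comp hresmeas
  have hXY : ProbabilityTheory.IndepFun X Y P := hbig.comp hφ hψ
  have hmulfun : f1 = fun t => X t * Y t := by
    funext t
    by_cases hts : t ∈ S
    · have h' : proj t ∈ S' := hts
      simp only [hf1def, hYdef, Set.indicator_of_mem hts, Set.indicator_of_mem h',
        Pi.one_apply, mul_one]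
    · have h' : proj t ∉ S' := hts
      simp only [hf1def, hYdef, Set.indicator_of_notMem hts, Set.indicator_of_notMem h',
        mul_zero]
  have hintmul : ∫ t, f1 t ∂P = (∫ t, X t ∂P) * ∫ t, Y t ∂P := by
    rw [hmulfun]
    exact ProbabilityTheory.IndepFun.integral_fun_mul_eq_mul_integral hXY hXmeas.aestronglyMeasurable hYmeas.aestronglyMeasurable
  have hYint : ∫ t, Y t ∂P = (P S).toReal := by
    have he : Y = S.indicator (fun _ => (1:ℝ)) := by
      funext t; by_cases hts : t ∈ S
      · have h' : proj t ∈ S' := hts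
        simp only [hYdef, Set.indicator_of_mem hts, Set.indicator_of_mem h', Pi.one_apply]
      · have h' : proj t ∉ S' := hts
        simp only [hYdef, Set.indicator_of_notMem hts, Set.indicator_of_notMem h']
    rw [he, integral_indicator_const (1:ℝ) hSmeas]; simp [measureReal_def]
  have hXlb : M ≤ ∫ t, X t ∂P := hM.trans (hmean istar).1
  have hPS0 : 0 ≤ (P S).toReal := ENNReal.toReal_nonneg
  have hl1 : M * (P S).toReal ≤ ∫ t, f1 t ∂P := by
    rw [hintmul, hYint]; exact mul_le_mul_of_nonneg_right hXlb hPS0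
  have hl2 : M * (P Sᶜ).toReal ≤ ∫ t, f2 t ∂P := by
    have hle : (fun t => Sᶜ.indicator (fun _ => M) t) ≤ᵐ[P] f2 := by
      filter_upwards [hae] with t ht
      by_cases hts : t ∈ Sᶜ
      · rw [Set.indicator_of_mem hts, hf2def, Set.indicator_of_mem hts]
        have h' : proj t ∉ S' := hts
        calc M ≤ ν := hMν
        _ ≤ maxOther c istar t := hν' t ht h'
        _ ≤ F t := maxOther_le_sup c istar t
      · rw [Set.indicator_of_notMem hts, hf2def, Set.indicator_of_notMem hts]
    have hconst : Integrable (Sᶜ.indicator fun _ => M) P :=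
      (integrable_const M).indicator hSmeas.compl
    have hmono := integral_mono_ae hconst hint2 hle
    calc M * (P Sᶜ).toReal = ∫ t, Sᶜ.indicator (fun _ => M) t ∂P := by
          rw [integral_indicator_const M hSmeas.compl]; simp [mul_comm, measureReal_def]
    _ ≤ _ := hmono
  have hsum : (P S).toReal + (P Sᶜ).toReal = 1 := by
    rw [← ENNReal.toReal_add (measure_ne_top P S) (measure_ne_top P Sᶜ),
      measure_add_measure_compl hSmeas, measure_univ, ENNReal.toReal_one]
  calc M = M * ((P S).toReal + (P Sᶜ).toReal) := by rw [hsum, mul_one]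
  _ = M * (P S).toReal + M * (P Sᶜ).toReal := by ring
  _ ≤ ∫ t, f1 t ∂P + ∫ t, f2 t ∂P := add_le_add hl1 hl2
  _ = ∫ t, (f1 t + f2 t) ∂P := (integral_add hint1 hint2).symm
  _ = ∫ t, Pay c p q t ∂P := (integral_congr_ae hpay).symm

/-- Under the Markov ambiguity set with independent types, any
favored-agent mechanism with favored agent `i* ∈ argmax_i μ̲_i` and threshold
`ν ≥ max_i μ̲_i` has expected payoff at least `max_i μ̲_i` under every admissible
distribution, hence worst-case expected payoff equal to the optimal value `max_i μ̲_i`,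
and is therefore optimal. -/
theorem stmt_17 {ι : Type*} [Fintype ι] [Nontrivial ι] [LinearOrder ι]
    (tlo thi mlo mhi c : ι → ℝ)
    (h0 : ∀ i, 0 ≤ tlo i) (h1 : ∀ i, tlo i < mlo i) (h2 : ∀ i, mlo i ≤ mhi i)
    (h3 : ∀ i, mhi i < thi i) (hc : ∀ i, 0 < c i)
    (istar : ι) (hstar : ∀ i, mlo i ≤ mlo istar)
    (ν : ℝ) (hν : Finset.univ.sup' Finset.univ_nonempty mlo ≤ ν)
    (p q : (ι → ℝ) → ι → ℝ) (hfa : IsFA tlo thi c istar ν p q) :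
    (∀ P : Measure (ι → ℝ), InP tlo thi mlo mhi P → IndepCoords P →
      Finset.univ.sup' Finset.univ_nonempty mlo ≤ ∫ t, Pay c p q t ∂P) ∧
    sInf {x : ℝ | ∃ P : Measure (ι → ℝ), InP tlo thi mlo mhi P ∧ IndepCoords P ∧
        x = ∫ t, Pay c p q t ∂P} =
      Finset.univ.sup' Finset.univ_nonempty mlo := by
  classical
  haveI hne : Nonempty {j : ι // j ≠ istar} :=
    ⟨⟨(exists_ne istar).choose, (exists_ne istar).choose_spec⟩⟩
  set M : ℝ := Finset.univ.sup' Finset.univ_nonempty mlo with hMdef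
  have hMeq : M = mlo istar :=
    le_antisymm (Finset.sup'_le _ _ fun i _ => hstar i)
      (Finset.le_sup' (f := mlo) (Finset.mem_univ istar))
  set G : ({j : ι // j ≠ istar} → ℝ) → ℝ := fun x => ⨆ j, (x j - c j.1) with hGdef
  have hGsup : G = fun x => Finset.univ.sup' Finset.univ_nonempty (fun j => x j - c j.1) :=
    funext fun x => (Finset.sup'_univ_eq_ciSup _).symm
  have hGmeas : Measurable G := by
    rw [hGsup]
    have h := Finset.measurable_sup' (s := (Finset.univ : Finset {j : ι // j ≠ istar}))
      Finset.univ_nonempty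
      (f := fun j (x : {j : ι // j ≠ istar} → ℝ) => x j - c j.1)
      (fun j _ => (measurable_pi_apply j).sub measurable_const)
    have he : Finset.univ.sup' Finset.univ_nonempty
        (fun j (x : {j : ι // j ≠ istar} → ℝ) => x j - c j.1)
        = fun x => Finset.univ.sup' Finset.univ_nonempty (fun j => x j - c j.1) :=
      funext fun x => Finset.sup'_apply _ _ x
    rwa [he] at h
  have hGG : ∀ t : ι → ℝ, maxOther c istar t = G (fun j : {j : ι // j ≠ istar} => t j.1) :=
    fun t => rfl
  -- part 1
  have part1 : ∀ P : Measure (ι → ℝ), InP tlo thi mlo mhi P → IndepCoords P →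
      M ≤ ∫ t, Pay c p q t ∂P := by
    intro P hP hind
    obtain ⟨hfa1, hfa2, htie⟩ := hfa
    rcases htie with htie | htie
    · refine core tlo thi mlo mhi c istar ν M hMeq.le (hν) hc p q
        {x | G x ≤ ν} (measurableSet_le hGmeas measurable_const) ?_ ?_ ?_ P hP hind
      · intro t ht hts
        rcases lt_or_eq_of_le (show maxOther c istar t ≤ ν by rw [hGG t]; exact hts) with hlt | heq
        · exact hfa1 t ht hlt
        · exact htie t ht heq
      · intro t ht hts
        exact hfa2 t ht (by rw [hGG t]; exact lt_of_not_ge hts)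
      · intro t ht hts
        rw [hGG t]; exact (lt_of_not_ge hts).le
    · refine core tlo thi mlo mhi c istar ν M hMeq.le (hν) hc p q
        {x | G x < ν} (measurableSet_lt hGmeas measurable_const) ?_ ?_ ?_ P hP hind
      · intro t ht hts
        exact hfa1 t ht (by rw [hGG t]; exact hts)
      · intro t ht hts
        have hle : ν ≤ G (fun j : {j : ι // j ≠ istar} => t j.1) := le_of_not_gt hts
        rcases lt_or_eq_of_le hle with hlt | heq
        · exact hfa2 t ht (by rw [hGG t]; exact hlt)
        · exact htie t ht (by rw [hGG t]; exact heq.symm)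
      · intro t ht hts
        rw [hGG t]; exact le_of_not_gt hts
  -- the Dirac point mass at mlo
  have hInT : InT tlo thi mlo := fun i => ⟨(h1 i).le, ((h2 i).trans_lt (h3 i)).le⟩
  have hInP : InP tlo thi mlo mhi (Measure.dirac mlo) := by
    refine ⟨inferInstance, ?_, ?_⟩
    · rw [ae_dirac_eq]; exact Filter.eventually_pure.mpr hInT
    · intro i
      rw [integral_dirac (fun t : ι → ℝ => t i) mlo]
      exact ⟨le_refl _, h2 i⟩
  have hlow : maxOther c istar mlo < ν := by
    rw [hGG, hGsup]
    refine (Finset.sup'_lt_iff _).mpr fun j _ => ?_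
    have ha : mlo j.1 - c j.1 < mlo j.1 := by have := hc j.1; linarith
    have hb : mlo j.1 ≤ M := Finset.le_sup' (f := mlo) (Finset.mem_univ j.1)
    linarith [hν]
  have hval : ∫ t, Pay c p q t ∂(Measure.dirac mlo) = M := by
    rw [integral_dirac (Pay c p q) mlo, payI (hfa.1 mlo hInT hlow), hMeq]
  have hmem : M ∈ {x : ℝ | ∃ P : Measure (ι → ℝ), InP tlo thi mlo mhi P ∧ IndepCoords P ∧
      x = ∫ t, Pay c p q t ∂P} :=
    ⟨Measure.dirac mlo, hInP, indepCoords_dirac mlo, hval.symm⟩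
  have hlb : ∀ x ∈ {x : ℝ | ∃ P : Measure (ι → ℝ), InP tlo thi mlo mhi P ∧ IndepCoords P ∧
      x = ∫ t, Pay c p q t ∂P}, M ≤ x := by
    rintro x ⟨P, hP, hind, rfl⟩
    exact part1 P hP hind
  exact ⟨part1, le_antisymm (csInf_le ⟨M, hlb⟩ hmem) (le_csInf ⟨M, hmem⟩ hlb)⟩
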